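/- Let Γ ∈ B(K) satisfy Γ² = Γ and Γ + 𝒥Γ𝒥 = 1, and define P_aux(Ξ) := Γ Ξ (1 − Γ) + (1 − Γ) Ξ Γ and P(Ξ) := (1/2)(P_aux(Ξ) − 𝒥 P_aux(Ξ) 𝒥). Then: (i) P(P(Ξ)) = P(Ξ) for all Ξ ∈ B(K); (ii) P(Ξ) = Ξ if and only if Γ Ξ Γ = 0, (1 − Γ) Ξ (1 − Γ) = 0 and Ξ + 𝒥Ξ𝒥 = 0; (iii) if Ξ + 𝒥Ξ𝒥 = 0, then P(Ξ) = P_aux(Ξ). -/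

import Mathlib

open scoped InnerProductSpace

/-- The element `(f, g)` of the Hilbert space direct sum `K = H ⊕ H`. -/
noncomputable def mkK {H : Type*} (f g : H) : WithLp 2 (H × H) :=
  (WithLp.equiv 2 (H × H)).symm (f, g)

/-- The conjugate-linear involution `𝒥(f, g) = (J g, J f)` on `K = H ⊕ H`. -/
noncomputable def JK {H : Type*} (J : H → H) (x : WithLp 2 (H × H)) : WithLp 2 (H × H) :=
  mkK (J ((WithLp.equiv 2 (H × H)) x).2) (J ((WithLp.equiv 2 (H × H)) x).1)

/-- Let `Γ ∈ B(K)` satisfy `Γ² = Γ` and `Γ + 𝒥Γ𝒥 = 1`, and define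
`P_aux(Ξ) := Γ Ξ (1 − Γ) + (1 − Γ) Ξ Γ` and `P(Ξ) := (1/2)(P_aux(Ξ) − 𝒥 P_aux(Ξ) 𝒥)`.
Then: (i) `P` is idempotent; (ii) `P(Ξ) = Ξ` iff `Γ Ξ Γ = 0`, `(1 − Γ) Ξ (1 − Γ) = 0` and
`Ξ + 𝒥Ξ𝒥 = 0`; (iii) if `Ξ + 𝒥Ξ𝒥 = 0` then `P(Ξ) = P_aux(Ξ)`. -/
theorem stmt8 {H : Type*} [NormedAddCommGroup H] [InnerProductSpace ℂ H] [CompleteSpace H]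
    (J : H → H)
    (hJinv : ∀ f : H, J (J f) = f)
    (hJadd : ∀ f g : H, J (f + g) = J f + J g)
    (hJsmul : ∀ (c : ℂ) (f : H), J (c • f) = (starRingEnd ℂ) c • J f)
    (hJinner : ∀ f g : H, ⟪J f, J g⟫_ℂ = ⟪g, f⟫_ℂ)
    (Jop : (WithLp 2 (H × H) →L[ℂ] WithLp 2 (H × H)) →
      (WithLp 2 (H × H) →L[ℂ] WithLp 2 (H × H)))
    (hJop : ∀ (Ξ : WithLp 2 (H × H) →L[ℂ] WithLp 2 (H × H)) (x : WithLp 2 (H × H)),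
      Jop Ξ x = JK J (Ξ (JK J x)))
    (Γ : WithLp 2 (H × H) →L[ℂ] WithLp 2 (H × H))
    (hidem : Γ * Γ = Γ)
    (hblock : Γ + Jop Γ = 1)
    (Paux P : (WithLp 2 (H × H) →L[ℂ] WithLp 2 (H × H)) →
      (WithLp 2 (H × H) →L[ℂ] WithLp 2 (H × H)))
    (hPaux : ∀ Ξ : WithLp 2 (H × H) →L[ℂ] WithLp 2 (H × H),
      Paux Ξ = Γ * Ξ * (1 - Γ) + (1 - Γ) * Ξ * Γ)
    (hP : ∀ Ξ : WithLp 2 (H × H) →L[ℂ] WithLp 2 (H × H),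
      P Ξ = (2⁻¹ : ℂ) • (Paux Ξ - Jop (Paux Ξ))) :
    (∀ Ξ : WithLp 2 (H × H) →L[ℂ] WithLp 2 (H × H), P (P Ξ) = P Ξ) ∧
    (∀ Ξ : WithLp 2 (H × H) →L[ℂ] WithLp 2 (H × H),
      P Ξ = Ξ ↔ (Γ * Ξ * Γ = 0 ∧ (1 - Γ) * Ξ * (1 - Γ) = 0 ∧ Ξ + Jop Ξ = 0)) ∧
    (∀ Ξ : WithLp 2 (H × H) →L[ℂ] WithLp 2 (H × H), Ξ + Jop Ξ = 0 → P Ξ = Paux Ξ) := by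
  -- basic facts about JK
  have hJK_invol : ∀ x : WithLp 2 (H × H), JK J (JK J x) = x := by
    intro x; simp [JK, mkK, hJinv]; rfl
  have hJK_add : ∀ a b : WithLp 2 (H × H), JK J (a + b) = JK J a + JK J b := by
    intro a b; simp [JK, mkK, hJadd]; rfl
  have hJK_smul : ∀ (c : ℂ) (a : WithLp 2 (H × H)),
      JK J (c • a) = (starRingEnd ℂ) c • JK J a := by
    intro c a; simp [JK, mkK, hJsmul]; rfl
  have hJK_neg : ∀ a : WithLp 2 (H × H), JK J (-a) = -JK J a := by
    intro a
    have := hJK_smul (-1) a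
    simpa using this
  -- operator-level facts about Jop
  have Jop_mul : ∀ A B, Jop (A * B) = Jop A * Jop B := by
    intro A B; ext x
    simp [hJop, ContinuousLinearMap.mul_apply, hJK_invol]
  have Jop_one : Jop 1 = 1 := by
    ext x; simp [hJop, hJK_invol]
  have Jop_add : ∀ A B, Jop (A + B) = Jop A + Jop B := by
    intro A B; ext x; simp [hJop, hJK_add]
  have Jop_neg : ∀ A, Jop (-A) = -Jop A := by
    intro A; ext x; simp [hJop, hJK_neg]
  have Jop_sub : ∀ A B, Jop (A - B) = Jop A - Jop B := by
    intro A B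
    rw [sub_eq_add_neg, Jop_add, Jop_neg, sub_eq_add_neg]
  have Jop_smul : ∀ (c : ℂ) A, Jop (c • A) = (starRingEnd ℂ) c • Jop A := by
    intro c A; ext x; simp [hJop, hJK_smul]
  have Jop_invol : ∀ A, Jop (Jop A) = A := by
    intro A; ext x; simp [hJop, hJK_invol]
  have hJΓ : Jop Γ = 1 - Γ := by
    rw [← hblock]; abel
  -- products with Q := 1 - Γ
  obtain ⟨Q, hQdef⟩ : ∃ Q : WithLp 2 (H × H) →L[ℂ] WithLp 2 (H × H), Q = 1 - Γ := ⟨_, rfl⟩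
  have hΓQ : Γ * Q = 0 := by
    rw [hQdef]; simp [mul_sub, hidem]
  have hQΓ : Q * Γ = 0 := by
    rw [hQdef]; simp [sub_mul, hidem]
  have hQQ : Q * Q = Q := by
    rw [hQdef]; simp [sub_mul, mul_sub, hidem]
  have hJΓ' : Jop Γ = Q := by rw [hJΓ, hQdef]
  have hJQ : Jop Q = Γ := by
    rw [hQdef, Jop_sub, Jop_one, hJΓ]; abel
  -- Paux facts
  have hPauxQ : ∀ X, Paux X = Γ * X * Q + Q * X * Γ := by
    intro X; rw [hPaux, hQdef]
  have Jop_Paux : ∀ X, Jop (Paux X) = Paux (Jop X) := by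
    intro X
    rw [hPauxQ, hPauxQ, Jop_add, Jop_mul, Jop_mul, Jop_mul, Jop_mul, hJΓ', hJQ]
    abel
  have Paux_smul : ∀ (c : ℂ) X, Paux (c • X) = c • Paux X := by
    intro c X
    rw [hPauxQ, hPauxQ]
    simp [mul_smul_comm, smul_mul_assoc, smul_add]
  have Paux_sub : ∀ A B, Paux (A - B) = Paux A - Paux B := by
    intro A B
    rw [hPauxQ, hPauxQ, hPauxQ, mul_sub, sub_mul, mul_sub, sub_mul]
    abel
  have Paux_add : ∀ A B, Paux (A + B) = Paux A + Paux B := by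
    intro A B
    rw [hPauxQ, hPauxQ, hPauxQ, mul_add, add_mul, mul_add, add_mul]
    abel
  have Paux_idem : ∀ X, Paux (Paux X) = Paux X := by
    intro X
    rw [hPauxQ, hPauxQ X]
    rw [mul_add, add_mul, mul_add, add_mul]
    have e1 : Γ * (Γ * X * Q) * Q = Γ * X * Q := by
      rw [show Γ * (Γ * X * Q) * Q = (Γ * Γ) * X * (Q * Q) by simp only [mul_assoc], hidem, hQQ]
    have e2 : Γ * (Q * X * Γ) * Q = 0 := by
      rw [show Γ * (Q * X * Γ) * Q = (Γ * Q) * X * (Γ * Q) by simp only [mul_assoc], hΓQ]; simp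
    have e3 : Q * (Γ * X * Q) * Γ = 0 := by
      rw [show Q * (Γ * X * Q) * Γ = (Q * Γ) * X * (Q * Γ) by simp only [mul_assoc], hQΓ]; simp
    have e4 : Q * (Q * X * Γ) * Γ = Q * X * Γ := by
      rw [show Q * (Q * X * Γ) * Γ = (Q * Q) * X * (Γ * Γ) by simp only [mul_assoc], hidem, hQQ]
    rw [e1, e2, e3, e4]; abel
  -- P rewritten through Paux
  have hP' : ∀ X, P X = Paux ((2⁻¹ : ℂ) • (X - Jop X)) := by
    intro X
    rw [hP, Jop_Paux, ← Paux_sub, ← Paux_smul]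
  have Jop_P : ∀ X, Jop (P X) = -P X := by
    intro X
    rw [hP, Jop_smul, Jop_sub, Jop_invol]
    have : (starRingEnd ℂ) (2⁻¹ : ℂ) = 2⁻¹ := by
      rw [map_inv₀, map_ofNat]
    rw [this, smul_sub, smul_sub]
    abel
  have half_cancel : ∀ A : WithLp 2 (H × H) →L[ℂ] WithLp 2 (H × H),
      (2⁻¹ : ℂ) • (A + A) = A := by
    intro A
    rw [← two_smul ℂ A, smul_smul]
    norm_num
  -- (iii)
  have part3 : ∀ Ξ, Ξ + Jop Ξ = 0 → P Ξ = Paux Ξ := by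
    intro Ξ hΞ
    have hJΞ : Jop Ξ = -Ξ := by linear_combination (norm := abel) hΞ
    rw [hP', hJΞ, sub_neg_eq_add, half_cancel]
  -- (i)
  have part1 : ∀ Ξ, P (P Ξ) = P Ξ := by
    intro Ξ
    rw [hP' (P Ξ), Jop_P, sub_neg_eq_add, half_cancel, hP', Paux_idem]
  refine ⟨part1, ?_, part3⟩
  intro Ξ
  constructor
  · intro hfix
    have hJΞ : Ξ + Jop Ξ = 0 := by
      have : Jop Ξ = -Ξ := by
        conv_lhs => rw [← hfix]
        rw [Jop_P, hfix]
      rw [this]; abel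
    have hPaΞ : Paux Ξ = Ξ := by rw [← part3 Ξ hJΞ, hfix]
    refine ⟨?_, ?_, hJΞ⟩
    · have : Γ * Paux Ξ * Γ = 0 := by
        rw [hPauxQ, mul_add, add_mul,
          show Γ * (Γ * Ξ * Q) * Γ = (Γ * Γ) * Ξ * (Q * Γ) by simp only [mul_assoc], hQΓ,
          show Γ * (Q * Ξ * Γ) * Γ = (Γ * Q) * Ξ * (Γ * Γ) by simp only [mul_assoc], hΓQ]
        simp
      rwa [hPaΞ] at this
    · have : Q * Paux Ξ * Q = 0 := by
        rw [hPauxQ, mul_add, add_mul,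
          show Q * (Γ * Ξ * Q) * Q = (Q * Γ) * Ξ * (Q * Q) by simp only [mul_assoc], hQΓ,
          show Q * (Q * Ξ * Γ) * Q = (Q * Q) * Ξ * (Γ * Q) by simp only [mul_assoc], hΓQ]
        simp
      rw [hPaΞ] at this
      rw [← hQdef]
      exact this
  · rintro ⟨h1, h2, h3⟩
    rw [part3 Ξ h3, hPauxQ]
    have hdecomp : (Γ + Q) * Ξ * (Γ + Q) = Ξ := by
      rw [show Γ + Q = 1 by rw [hQdef]; abel]; simp
    have hexp : (Γ + Q) * Ξ * (Γ + Q)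
        = Γ * Ξ * Γ + Γ * Ξ * Q + Q * Ξ * Γ + Q * Ξ * Q := by
      simp only [add_mul, mul_add]; abel
    have h2' : Q * Ξ * Q = 0 := by rw [hQdef]; exact h2
    have := hdecomp
    rw [hexp, h1, h2'] at this
    rw [zero_add, add_zero] at this
    exact this
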